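/- Convexity of Rényi entropy: for any two equivalent probability measures ν ≪≫ ω, the function α ↦ log ∫ (dν/dω)^α dω, with values in (−∞,+∞], is convex on ℝ, vanishes at α = 0 and α = 1, is nonpositive on [0,1] and nonnegative outside [0,1]. -/

import Mathlib

open MeasureTheory
open scoped ENNReal

/-- Hölder's inequality for powers. -/
lemma holder_rpow_aux {Ω : Type*} [MeasurableSpace Ω] (μ : Measure Ω) (f : Ω → ℝ≥0∞)
    (hf : AEMeasurable f μ) (hpos : ∀ᵐ x ∂μ, 0 < f x) (htop : ∀ᵐ x ∂μ, f x ≠ ∞)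
    {a b θ : ℝ} (h0 : 0 < θ) (h1 : θ < 1) :
    ∫⁻ x, f x ^ (θ * a + (1 - θ) * b) ∂μ ≤
      (∫⁻ x, f x ^ a ∂μ) ^ θ * (∫⁻ x, f x ^ b ∂μ) ^ (1 - θ) := by
  have h1' : 0 < 1 - θ := by linarith
  have hpq : Real.HolderConjugate (1 / θ) (1 / (1 - θ)) :=
    Real.holderConjugate_one_div h0 h1' (by ring)
  have key := ENNReal.lintegral_mul_le_Lp_mul_Lq μ hpq
    (f := fun x => f x ^ (θ * a)) (g := fun x => f x ^ ((1 - θ) * b))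
    (hf.pow_const _) (hf.pow_const _)
  have e1 : ∫⁻ x, f x ^ (θ * a + (1 - θ) * b) ∂μ
      = ∫⁻ x, ((fun x => f x ^ (θ * a)) * fun x => f x ^ ((1 - θ) * b)) x ∂μ := by
    refine lintegral_congr_ae ?_
    filter_upwards [hpos, htop] with x hx hx' using
      ENNReal.rpow_add _ _ hx.ne' hx'
  have e2 : ∀ x, (f x ^ (θ * a)) ^ θ⁻¹ = f x ^ a := fun x => by
    rw [← ENNReal.rpow_mul]; congr 1; field_simp
  have e3 : ∀ x, (f x ^ ((1 - θ) * b)) ^ (1 - θ)⁻¹ = f x ^ b := fun x => by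
    rw [← ENNReal.rpow_mul]; congr 1; field_simp
  simp only [one_div, inv_inv] at key
  simp only [e2, e3] at key
  rw [e1]
  exact key

/-- The relative Rényi `α`-entropy `log ∫ (dν/dω)^α dω ∈ (−∞, +∞]` of two equivalent
probability measures, as an extended real number. -/
noncomputable def renyiEnt {Ω : Type*} [MeasurableSpace Ω] (ν ω : Measure Ω) (α : ℝ) :
    EReal :=
  ENNReal.log (∫⁻ x, ν.rnDeriv ω x ^ α ∂ω)

/-- For mutually absolutely continuous probability measures `ν ≃ ω`,
the function `α ↦ log ∫ (dν/dω)^α dω`, with values in `(−∞, +∞]`, is convex on `ℝ`,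
vanishes at `α = 0` and `α = 1`, is nonpositive on `[0,1]` and nonnegative outside
`[0,1]`. -/
theorem stmt13 {Ω : Type*} [MeasurableSpace Ω] (ν ω : Measure Ω)
    [IsProbabilityMeasure ν] [IsProbabilityMeasure ω]
    (hνω : ν ≪ ω) (hων : ω ≪ ν) :
    (∀ a b θ : ℝ, 0 ≤ θ → θ ≤ 1 →
      renyiEnt ν ω (θ * a + (1 - θ) * b) ≤
        (θ : EReal) * renyiEnt ν ω a + ((1 - θ : ℝ) : EReal) * renyiEnt ν ω b) ∧
    renyiEnt ν ω 0 = 0 ∧ renyiEnt ν ω 1 = 0 ∧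
    (∀ α ∈ Set.Icc (0 : ℝ) 1, renyiEnt ν ω α ≤ 0) ∧
    (∀ α : ℝ, α ∉ Set.Icc (0 : ℝ) 1 → 0 ≤ renyiEnt ν ω α) := by
  set f : Ω → ℝ≥0∞ := ν.rnDeriv ω with hf_def
  have hf : AEMeasurable f ω := (Measure.measurable_rnDeriv ν ω).aemeasurable
  have hpos : ∀ᵐ x ∂ω, 0 < f x := Measure.rnDeriv_pos' hων
  have htop : ∀ᵐ x ∂ω, f x ≠ ∞ := Measure.rnDeriv_ne_top ν ω
  set F : ℝ → ℝ≥0∞ := fun α => ∫⁻ x, f x ^ α ∂ω with hF_def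
  have hkey : ∀ {a b θ : ℝ}, 0 < θ → θ < 1 →
      F (θ * a + (1 - θ) * b) ≤ F a ^ θ * F b ^ (1 - θ) :=
    fun h0 h1 => holder_rpow_aux ω f hf hpos htop h0 h1
  have hF0 : F 0 = 1 := by
    simp [hF_def, ENNReal.rpow_zero]
  have hF1 : F 1 = 1 := by
    simp only [hF_def, ENNReal.rpow_one]
    rw [Measure.lintegral_rnDeriv hνω]
    simp
  have hR : ∀ α, renyiEnt ν ω α = ENNReal.log (F α) := fun α => rfl
  refine ⟨?_, ?_, ?_, ?_, ?_⟩
  · intro a b θ h0 h1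
    rcases eq_or_lt_of_le h0 with rfl | h0'
    · simp [hR]
    rcases eq_or_lt_of_le h1 with rfl | h1'
    · simp [hR]
    have := hkey (a := a) (b := b) h0' h1'
    calc renyiEnt ν ω (θ * a + (1 - θ) * b)
        ≤ ENNReal.log (F a ^ θ * F b ^ (1 - θ)) := by
          rw [hR]; exact ENNReal.log_le_log_iff.2 this
      _ = (θ : EReal) * renyiEnt ν ω a + ((1 - θ : ℝ) : EReal) * renyiEnt ν ω b := by
          rw [ENNReal.log_mul_add, ENNReal.log_rpow, ENNReal.log_rpow, hR, hR]
  · simp [hR, hF0]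
  · simp [hR, hF1]
  · intro α hα
    obtain ⟨hα0, hα1⟩ := hα
    rw [hR]
    refine ENNReal.log_le_zero_iff.2 ?_
    rcases eq_or_lt_of_le hα0 with rfl | h0'
    · simp [hF0]
    rcases eq_or_lt_of_le hα1 with rfl | h1'
    · simp [hF1]
    have h := hkey (a := 1) (b := 0) h0' h1'
    rw [hF0, hF1] at h
    simpa using h
  · intro α hα
    rw [hR]
    refine ENNReal.zero_le_log_iff.2 ?_
    rw [Set.mem_Icc, not_and_or, not_le, not_le] at hα
    rcases hα with hneg | hgt
    · -- α < 0 : use θ = 1/(1-α), a = α, b = 1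
      set θ : ℝ := 1 / (1 - α) with hθ
      have h1α : 0 < 1 - α := by linarith
      have h0' : 0 < θ := by positivity
      have h1' : θ < 1 := by
        rw [hθ, div_lt_one h1α]; linarith
      have hcomb : θ * α + (1 - θ) * 1 = 0 := by
        rw [hθ]; field_simp; ring
      have h := hkey (a := α) (b := 1) h0' h1'
      rw [hcomb, hF0, hF1, ENNReal.one_rpow, mul_one] at h
      by_contra hc
      push_neg at hc
      exact absurd h (not_le.2 (ENNReal.rpow_lt_one hc h0'))
    · -- α > 1 : use θ = 1/α, a = α, b = 0
      set θ : ℝ := 1 / α with hθ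
      have hα0 : 0 < α := by linarith
      have h0' : 0 < θ := by positivity
      have h1' : θ < 1 := by
        rw [hθ, div_lt_one hα0]; linarith
      have hcomb : θ * α + (1 - θ) * 0 = 1 := by
        rw [hθ]; field_simp; ring
      have h := hkey (a := α) (b := 0) h0' h1'
      rw [hcomb, hF0, hF1, ENNReal.one_rpow, mul_one] at h
      by_contra hc
      push_neg at hc
      exact absurd h (not_le.2 (ENNReal.rpow_lt_one hc h0'))
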